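/- Let q, p : ℝ → ℝ³ be smooth curves with p(t) · q(t) = 1 and p'(t) = q(t) × q'(t) for all t, and suppose I := det(q, q', q'') and Ī := det(p, p', p'') are nowhere zero. Setting J := det(q', q'', q'''), J̄ := det(p', p'', p'''), K := det(q, q'', q''') and K̄ := det(p, p'', p'''), one has Ī = I, J̄ = −J, and K̄ = K identically. -/

import Mathlib

open Matrix

/-- Scalar triple product on ℝ³. -/
def det3 (u v w : Fin 3 → ℝ) : ℝ := u ⬝ᵥ (v ⨯₃ w)

private lemma hasDerivAt_dot3 {f g : ℝ → Fin 3 → ℝ} {f' g' : Fin 3 → ℝ} {t : ℝ}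
    (hf : HasDerivAt f f' t) (hg : HasDerivAt g g' t) :
    HasDerivAt (fun s => f s ⬝ᵥ g s) (f' ⬝ᵥ g t + f t ⬝ᵥ g') t := by
  rw [hasDerivAt_pi] at hf hg
  simp only [dotProduct, Fin.sum_univ_three]
  exact ((((hf 0).mul (hg 0)).add ((hf 1).mul (hg 1))).add
    ((hf 2).mul (hg 2))).congr_deriv (by ring)

private lemma hasDerivAt_cross3 {f g : ℝ → Fin 3 → ℝ} {f' g' : Fin 3 → ℝ} {t : ℝ}
    (hf : HasDerivAt f f' t) (hg : HasDerivAt g g' t) :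
    HasDerivAt (fun s => f s ⨯₃ g s) (f' ⨯₃ g t + f t ⨯₃ g') t := by
  rw [hasDerivAt_pi] at hf hg ⊢
  intro i
  fin_cases i <;> simp [cross_apply] <;>
    [exact (((hf 1).mul (hg 2)).sub ((hf 2).mul (hg 1))).congr_deriv (by ring);
     exact (((hf 2).mul (hg 0)).sub ((hf 0).mul (hg 2))).congr_deriv (by ring);
     exact (((hf 0).mul (hg 1)).sub ((hf 1).mul (hg 0))).congr_deriv (by ring)]

private lemma key_alg (P a b c d : Fin 3 → ℝ)
    (h1 : P ⬝ᵥ a = 1) (h2 : P ⬝ᵥ b = 0) (h3 : P ⬝ᵥ c = 0)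
    (h4 : P ⬝ᵥ d = -det3 a b c) :
    det3 P (a ⨯₃ b) (a ⨯₃ c) = det3 a b c ∧
    det3 (a ⨯₃ b) (a ⨯₃ c) (b ⨯₃ c + a ⨯₃ d) = -det3 b c d ∧
    det3 P (a ⨯₃ c) (b ⨯₃ c + a ⨯₃ d) = det3 a c d := by
  simp only [det3, cross_apply, dotProduct, Fin.sum_univ_three, Pi.add_apply,
    Matrix.cons_val_zero, Matrix.cons_val_one, Matrix.head_cons, Matrix.cons_val_two,
    Matrix.tail_cons] at h1 h2 h3 h4 ⊢
  refine ⟨?_, ?_, ?_⟩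
  · linear_combination (a 0 * (b 1 * c 2 - b 2 * c 1) - a 1 * (b 0 * c 2 - b 2 * c 0)
      + a 2 * (b 0 * c 1 - b 1 * c 0)) * h1
  · linear_combination
      (-(b 0 * (c 1 * d 2 - c 2 * d 1) - b 1 * (c 0 * d 2 - c 2 * d 0)
        + b 2 * (c 0 * d 1 - c 1 * d 0))) * h1
      + (a 0 * (c 1 * d 2 - c 2 * d 1) - a 1 * (c 0 * d 2 - c 2 * d 0)
        + a 2 * (c 0 * d 1 - c 1 * d 0)) * h2
      + (-(a 0 * (b 1 * d 2 - b 2 * d 1) - a 1 * (b 0 * d 2 - b 2 * d 0)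
        + a 2 * (b 0 * d 1 - b 1 * d 0))) * h3
      + (a 0 * (b 1 * c 2 - b 2 * c 1) - a 1 * (b 0 * c 2 - b 2 * c 0)
        + a 2 * (b 0 * c 1 - b 1 * c 0)) * h4
  · linear_combination
      (a 0 * (b 1 * c 2 - b 2 * c 1) - a 1 * (b 0 * c 2 - b 2 * c 0)
        + a 2 * (b 0 * c 1 - b 1 * c 0)) * h3
      + (a 0 * (c 1 * d 2 - c 2 * d 1) - a 1 * (c 0 * d 2 - c 2 * d 0)
        + a 2 * (c 0 * d 1 - c 1 * d 0)) * h1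

/-- Along integral curves of the Cartan–Engel system `p ⬝ᵥ q = 1`, `p' = q × q'`:
`Ī = I`, `J̄ = −J` and `K̄ = K`. -/
theorem dancing_pair_invariants (q p : ℝ → Fin 3 → ℝ)
    (hq : ContDiff ℝ (⊤ : ℕ∞) q) (hp : ContDiff ℝ (⊤ : ℕ∞) p)
    (hpq : ∀ t, p t ⬝ᵥ q t = 1)
    (hode : ∀ t, deriv p t = q t ⨯₃ deriv q t)
    (hI : ∀ t, det3 (q t) (deriv q t) (deriv (deriv q) t) ≠ 0)
    (hIbar : ∀ t, det3 (p t) (deriv p t) (deriv (deriv p) t) ≠ 0) :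
    ∀ t, det3 (p t) (deriv p t) (deriv (deriv p) t)
        = det3 (q t) (deriv q t) (deriv (deriv q) t) ∧
      det3 (deriv p t) (deriv (deriv p) t) (deriv (deriv (deriv p)) t)
        = -det3 (deriv q t) (deriv (deriv q) t) (deriv (deriv (deriv q)) t) ∧
      det3 (p t) (deriv (deriv p) t) (deriv (deriv (deriv p)) t)
        = det3 (q t) (deriv (deriv q) t) (deriv (deriv (deriv q)) t) := by
  -- smoothness of derivatives of q and p
  have hq1 : ContDiff ℝ (⊤ : ℕ∞) (deriv q) := (contDiff_infty_iff_deriv.mp hq).2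
  have hq2 : ContDiff ℝ (⊤ : ℕ∞) (deriv (deriv q)) := (contDiff_infty_iff_deriv.mp hq1).2
  have hp1 : ContDiff ℝ (⊤ : ℕ∞) (deriv p) := (contDiff_infty_iff_deriv.mp hp).2
  -- basic HasDerivAt facts for q
  have hd0 : ∀ t, HasDerivAt q (deriv q t) t := fun t =>
    ((hq.differentiable (by simp)) t).hasDerivAt
  have hd1 : ∀ t, HasDerivAt (deriv q) (deriv (deriv q) t) t := fun t =>
    ((hq1.differentiable (by simp)) t).hasDerivAt
  have hd2 : ∀ t, HasDerivAt (deriv (deriv q)) (deriv (deriv (deriv q)) t) t := fun t =>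
    ((hq2.differentiable (by simp)) t).hasDerivAt
  have hpd0 : ∀ t, HasDerivAt p (deriv p t) t := fun t =>
    ((hp.differentiable (by simp)) t).hasDerivAt
  -- deriv p as a function
  have hdp : deriv p = fun s => q s ⨯₃ deriv q s := funext hode
  -- second derivative of p
  have hpd1 : ∀ t, HasDerivAt (deriv p) (q t ⨯₃ deriv (deriv q) t) t := by
    intro t
    rw [hdp]
    have := hasDerivAt_cross3 (hd0 t) (hd1 t)
    simpa [cross_self] using this
  have hddp : deriv (deriv p) = fun s => q s ⨯₃ deriv (deriv q) s :=
    funext fun t => (hpd1 t).deriv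
  -- third derivative of p
  have hpd2 : ∀ t, HasDerivAt (deriv (deriv p))
      (deriv q t ⨯₃ deriv (deriv q) t + q t ⨯₃ deriv (deriv (deriv q)) t) t := by
    intro t
    rw [hddp]
    exact hasDerivAt_cross3 (hd0 t) (hd2 t)
  have hdddp : deriv (deriv (deriv p)) =
      fun s => deriv q s ⨯₃ deriv (deriv q) s + q s ⨯₃ deriv (deriv (deriv q)) s :=
    funext fun t => (hpd2 t).deriv
  -- orthogonality relations from differentiating p ⬝ᵥ q = 1
  have horth1 : ∀ t, p t ⬝ᵥ deriv q t = 0 := by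
    intro t
    have h := hasDerivAt_dot3 (hpd0 t) (hd0 t)
    have hc : HasDerivAt (fun s => p s ⬝ᵥ q s) 0 t := by
      have : (fun s => p s ⬝ᵥ q s) = fun _ => (1 : ℝ) := funext hpq
      rw [this]; exact hasDerivAt_const t 1
    have h0 : deriv p t ⬝ᵥ q t + p t ⬝ᵥ deriv q t = 0 := h.unique hc
    have h1 : deriv p t ⬝ᵥ q t = 0 := by
      rw [hode t]
      simp only [dotProduct, cross_apply, Fin.sum_univ_three, Matrix.cons_val_zero,
        Matrix.cons_val_one, Matrix.head_cons, Matrix.cons_val_two, Matrix.tail_cons]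
      ring
    linarith
  have horth2 : ∀ t, p t ⬝ᵥ deriv (deriv q) t = 0 := by
    intro t
    have h := hasDerivAt_dot3 (hpd0 t) (hd1 t)
    have hc : HasDerivAt (fun s => p s ⬝ᵥ deriv q s) 0 t := by
      have : (fun s => p s ⬝ᵥ deriv q s) = fun _ => (0 : ℝ) := funext horth1
      rw [this]; exact hasDerivAt_const t 0
    have h0 : deriv p t ⬝ᵥ deriv q t + p t ⬝ᵥ deriv (deriv q) t = 0 := h.unique hc
    have h1 : deriv p t ⬝ᵥ deriv q t = 0 := by
      rw [hode t]
      simp only [dotProduct, cross_apply, Fin.sum_univ_three, Matrix.cons_val_zero,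
        Matrix.cons_val_one, Matrix.head_cons, Matrix.cons_val_two, Matrix.tail_cons]
      ring
    linarith
  have horth3 : ∀ t, p t ⬝ᵥ deriv (deriv (deriv q)) t
      = -det3 (q t) (deriv q t) (deriv (deriv q) t) := by
    intro t
    have h := hasDerivAt_dot3 (hpd0 t) (hd2 t)
    have hc : HasDerivAt (fun s => p s ⬝ᵥ deriv (deriv q) s) 0 t := by
      have : (fun s => p s ⬝ᵥ deriv (deriv q) s) = fun _ => (0 : ℝ) := funext horth2
      rw [this]; exact hasDerivAt_const t 0
    have h0 : deriv p t ⬝ᵥ deriv (deriv q) t + p t ⬝ᵥ deriv (deriv (deriv q)) t = 0 :=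
      h.unique hc
    have h1 : deriv p t ⬝ᵥ deriv (deriv q) t = det3 (q t) (deriv q t) (deriv (deriv q) t) := by
      rw [hode t]
      simp only [det3, dotProduct, cross_apply, Fin.sum_univ_three, Matrix.cons_val_zero,
        Matrix.cons_val_one, Matrix.head_cons, Matrix.cons_val_two, Matrix.tail_cons]
      ring
    linarith
  intro t
  have key := key_alg (p t) (q t) (deriv q t) (deriv (deriv q) t) (deriv (deriv (deriv q)) t)
    (hpq t) (horth1 t) (horth2 t) (horth3 t)
  rw [hode t, (hpd1 t).deriv, (hpd2 t).deriv]
  exact key
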